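/- Fix ρ ∈ (0,1), α > 0, b > 0, A₀ ≥ 0 small (specifically with v(0) < 1 where v is defined below). For δ ≥ 0 let Q(δ) be the unique positive root of ρc(δ)Q² + (1-ρ-ρc(δ))Q - 1 = 0 where c(δ) = α(δ+1)²/b, and define v(δ) = ρQ(δ)c(δ)(δ+A₀)(1-ρ+ρQ(δ)c(δ)) / ((1-ρ)(1+ρQ(δ)c(δ))). Then v is continuous and strictly increasing on [0,∞), v(δ) → ∞ as δ → ∞, and hence the equation v(δ) = 1 has a unique solution δ* > 0. -/

import Mathlib

open Filter

/-- The infinite-horizon fixed-point equation `v(δ) = 1` for the time-average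
age-reduction estimator has a unique positive solution: with
`c(δ) = α(δ+1)²/b`, `Q(δ)` the unique positive root of
`ρc(δ)Q² + (1-ρ-ρc(δ))Q - 1 = 0`, and
`v(δ) = ρQ(δ)c(δ)(δ+A₀)(1-ρ+ρQ(δ)c(δ))/((1-ρ)(1+ρQ(δ)c(δ)))`,
`v` is continuous and strictly increasing on `[0,∞)`, tends to `∞`, and
(assuming `v 0 < 1`) the equation `v δ = 1` has a unique solution `δ* > 0`. -/
theorem stmt_9 (ρ α b A₀ : ℝ) (hρ : ρ ∈ Set.Ioo (0 : ℝ) 1) (hα : 0 < α)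
    (hb : 0 < b) (hA₀ : 0 ≤ A₀)
    (c Q v : ℝ → ℝ)
    (hc : ∀ δ : ℝ, c δ = α * (δ + 1) ^ 2 / b)
    (hQ : ∀ δ : ℝ, 0 ≤ δ →
      0 < Q δ ∧ ρ * c δ * Q δ ^ 2 + (1 - ρ - ρ * c δ) * Q δ - 1 = 0)
    (hv : ∀ δ : ℝ, v δ = ρ * Q δ * c δ * (δ + A₀) * (1 - ρ + ρ * Q δ * c δ) /
      ((1 - ρ) * (1 + ρ * Q δ * c δ)))
    (hv0 : v 0 < 1) :
    ContinuousOn v (Set.Ici 0) ∧ StrictMonoOn v (Set.Ici 0) ∧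
      Tendsto v atTop atTop ∧
      ∃! δstar : ℝ, 0 < δstar ∧ v δstar = 1 := by
  obtain ⟨hρ0, hρ1⟩ := hρ
  have h1ρ : 0 < 1 - ρ := by linarith
  set f : ℝ → ℝ := fun δ => ρ * α * (δ + 1) ^ 2 * (δ + A₀) / (b * (1 - ρ)) with hf
  -- Key simplification: on [0,∞), v δ = ρ c δ (δ + A₀) / (1 - ρ) = f δ.
  have hkey : Set.EqOn v f (Set.Ici 0) := by
    intro δ hδ
    have hδ0 : (0:ℝ) ≤ δ := hδ
    obtain ⟨hQpos, hquad⟩ := hQ δ hδ0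
    have hcpos : 0 < c δ := by
      rw [hc]
      have : (0:ℝ) < δ + 1 := by linarith
      positivity
    have htpos : 0 < ρ * Q δ * c δ := by positivity
    have heq : (ρ * Q δ * c δ) * (1 - ρ + ρ * Q δ * c δ)
        = ρ * c δ * (1 + ρ * Q δ * c δ) := by
      linear_combination (ρ * c δ) * hquad
    have h1 : v δ = ρ * c δ * (δ + A₀) / (1 - ρ) := by
      rw [hv]
      rw [div_eq_div_iff (by positivity) (by positivity)]
      linear_combination ((1 - ρ) * (δ + A₀)) * heq
    rw [h1, hc]
    show _ = ρ * α * (δ + 1) ^ 2 * (δ + A₀) / (b * (1 - ρ))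
    rw [div_eq_div_iff (by linarith) (by positivity)]
    field_simp
  have hfc : Continuous f := by
    apply Continuous.div_const
    continuity
  have hcont : ContinuousOn v (Set.Ici 0) := hfc.continuousOn.congr hkey
  have hmono : StrictMonoOn v (Set.Ici 0) := by
    intro x hx y hy hxy
    rw [hkey hx, hkey hy]
    have hx0 : (0:ℝ) ≤ x := hx
    have hy0 : (0:ℝ) < y := lt_of_le_of_lt hx0 hxy
    have P : (x + 1) ^ 2 * (x + A₀) < (y + 1) ^ 2 * (y + A₀) := by
      nlinarith [sq_nonneg x, sq_nonneg y, mul_nonneg hx0 hA₀,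
        mul_nonneg hy0.le hA₀, mul_nonneg hx0 hy0.le, sq_nonneg (x + y)]
    have hnum : ρ * α * (x + 1) ^ 2 * (x + A₀) < ρ * α * (y + 1) ^ 2 * (y + A₀) := by
      nlinarith [mul_lt_mul_of_pos_left P (mul_pos hρ0 hα)]
    show ρ * α * (x + 1) ^ 2 * (x + A₀) / (b * (1 - ρ))
        < ρ * α * (y + 1) ^ 2 * (y + A₀) / (b * (1 - ρ))
    exact (div_lt_div_iff_of_pos_right (by positivity)).mpr hnum
  have hfT : Tendsto f atTop atTop := by
    have h1 : Tendsto (fun δ : ℝ => δ + 1) atTop atTop :=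
      tendsto_atTop_add_const_right _ _ tendsto_id
    have h2 : Tendsto (fun δ : ℝ => δ + A₀) atTop atTop :=
      tendsto_atTop_add_const_right _ _ tendsto_id
    have h3 : Tendsto (fun δ : ℝ => (δ + 1) ^ 2 * (δ + A₀)) atTop atTop :=
      Tendsto.atTop_mul_atTop₀ ((tendsto_pow_atTop (by norm_num)).comp h1) h2
    have h4 : Tendsto (fun δ : ℝ => (ρ * α / (b * (1 - ρ))) *
        ((δ + 1) ^ 2 * (δ + A₀))) atTop atTop :=
      Tendsto.const_mul_atTop (by positivity) h3
    refine h4.congr fun δ => ?_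
    simp only [hf]
    ring
  have hvT : Tendsto v atTop atTop := by
    refine hfT.congr' ?_
    filter_upwards [eventually_ge_atTop (0:ℝ)] with δ hδ
    exact (hkey hδ).symm
  refine ⟨hcont, hmono, hvT, ?_⟩
  obtain ⟨M, hM1, hM0⟩ := ((hvT.eventually_ge_atTop 1).and (eventually_ge_atTop (0:ℝ))).exists
  have hsub : Set.Icc (0:ℝ) M ⊆ Set.Ici 0 := fun z hz => hz.1
  have hIVT := intermediate_value_Icc hM0 (hcont.mono hsub)
  have h1mem : (1:ℝ) ∈ Set.Icc (v 0) (v M) := ⟨hv0.le, hM1⟩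
  obtain ⟨δstar, hδmem, hδeq⟩ := hIVT h1mem
  have hδpos : 0 < δstar := by
    rcases lt_or_eq_of_le hδmem.1 with h | h
    · exact h
    · exfalso; rw [← h] at hδeq; rw [← hδeq] at hv0; exact lt_irrefl _ hv0
  refine ⟨δstar, ⟨hδpos, hδeq⟩, ?_⟩
  rintro y ⟨hy0, hy1⟩
  exact hmono.injOn hy0.le hδmem.1 (by rw [hy1, hδeq])
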